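/- Let A be a real symmetric n×n matrix with orthonormal eigenbasis (χ_1,…,χ_n), eigenvalues λ_1,…,λ_n ∈ [0, Λ]. Let I_0, I_1, …, I_J be pairwise disjoint subsets of [0, Λ] whose union is [0, Λ], and set I_{−1} = ∅. Let ψ_0, …, ψ_J : [0, Λ] → [0,1] satisfy Σ_{j=0}^J ψ_j(λ) = 1 for all λ ∈ [0, Λ], and ψ_j(λ) = 0 whenever λ ∉ I_{j−1} ∪ I_j (for every 0 ≤ j ≤ J). For g : [0,Λ] → ℝ and I ⊆ [0,Λ], define g(A_I)v = Σ_{ℓ : λ_ℓ ∈ I} g(λ_ℓ)·⟨χ_ℓ, v⟩·χ_ℓ. Then for every f ∈ ℝ^n: Σ_{j=0}^J Σ_{m=1}^n ( |⟨ √ψ_j(A_{I_{j−1}}) δ_m, f ⟩|² + |⟨ √ψ_j(A_{I_j}) δ_m, f ⟩|² ) = ‖f‖², i.e. the family { √ψ_j(A_{I_{j−1}}) δ_m, √ψ_j(A_{I_j}) δ_m : 0 ≤ j ≤ J, 1 ≤ m ≤ n } is a tight frame of ℝ^n with frame constant 1. -/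

import Mathlib

open MeasureTheory Real
open scoped RealInnerProductSpace Classical

/-- `specCut b lam g I v = Σ_{ℓ : lam ℓ ∈ I} g(lam ℓ) • ⟪b ℓ, v⟫ • b ℓ`, the vector
`g(A_I)v` for the symmetric matrix `A` with orthonormal eigenbasis `b` and eigenvalues `lam`. -/
noncomputable def specCut {n : ℕ} (b : OrthonormalBasis (Fin n) ℝ (EuclideanSpace ℝ (Fin n)))
    (lam : Fin n → ℝ) (g : ℝ → ℝ) (I : Set ℝ) (v : EuclideanSpace ℝ (Fin n)) :
    EuclideanSpace ℝ (Fin n) :=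
  ∑ ℓ, (if lam ℓ ∈ I then g (lam ℓ) else 0) • ⟪b ℓ, v⟫ • b ℓ

/-- `Iprev I j` is `I (j-1)` for `j ≥ 1`, and `∅` for `j = 0` (the convention `I_{−1} = ∅`). -/
def Iprev (I : ℕ → Set ℝ) : ℕ → Set ℝ
  | 0 => ∅
  | j + 1 => I j

lemma aux_sum_sq {n : ℕ} (b : OrthonormalBasis (Fin n) ℝ (EuclideanSpace ℝ (Fin n)))
    (c : Fin n → ℝ) :
    ∑ m : Fin n, (∑ ℓ, c ℓ * b ℓ m) ^ 2 = ∑ ℓ, (c ℓ) ^ 2 := by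
  have hb := b.orthonormal
  rw [orthonormal_iff_ite] at hb
  have h1 : ∀ ℓ k : Fin n, (∑ m, b ℓ m * b k m) = if ℓ = k then (1 : ℝ) else 0 := by
    intro ℓ k
    have := hb ℓ k
    rw [PiLp.inner_apply] at this
    convert this using 2 with m
    simp [mul_comm]
  calc ∑ m : Fin n, (∑ ℓ, c ℓ * b ℓ m) ^ 2
      = ∑ m : Fin n, ∑ ℓ, ∑ k, (c ℓ * b ℓ m) * (c k * b k m) := by
        refine Finset.sum_congr rfl fun m _ => ?_
        rw [sq, Finset.sum_mul_sum]
    _ = ∑ ℓ, ∑ k, c ℓ * c k * ∑ m, b ℓ m * b k m := by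
        rw [Finset.sum_comm]
        refine Finset.sum_congr rfl fun ℓ _ => ?_
        rw [Finset.sum_comm]
        refine Finset.sum_congr rfl fun k _ => ?_
        rw [Finset.mul_sum]
        exact Finset.sum_congr rfl fun m _ => by ring
    _ = ∑ ℓ, (c ℓ) ^ 2 := by
        simp [h1, mul_ite, sq]

/-- Let `A` be a real symmetric `n×n` matrix with orthonormal eigenbasis `b`
and eigenvalues `lam ℓ ∈ [0,Λ]`.  Let `I 0, …, I J` be pairwise disjoint subsets of `[0,Λ]`
with union `[0,Λ]` and `I_{−1} = ∅`, and let `ψ 0, …, ψ J : [0,Λ] → [0,1]` be a partition of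
unity with `ψ j` vanishing outside `I_{j−1} ∪ I_j`.  Then the family
`{√ψ_j(A_{I_{j−1}})δ_m, √ψ_j(A_{I_j})δ_m}` is a tight frame of `ℝⁿ` with frame constant `1`. -/
theorem stmt15
    {n J : ℕ} {Λ : ℝ}
    (b : OrthonormalBasis (Fin n) ℝ (EuclideanSpace ℝ (Fin n)))
    (lam : Fin n → ℝ) (hlam : ∀ ℓ, lam ℓ ∈ Set.Icc 0 Λ)
    (I : ℕ → Set ℝ)
    (hIsub : ∀ j ≤ J, I j ⊆ Set.Icc 0 Λ)
    (hIdisj : ∀ i ≤ J, ∀ j ≤ J, i ≠ j → Disjoint (I i) (I j))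
    (hIunion : (⋃ j ∈ Finset.range (J + 1), I j) = Set.Icc 0 Λ)
    (ψ : ℕ → ℝ → ℝ)
    (hψrange : ∀ j ≤ J, ∀ x ∈ Set.Icc 0 Λ, ψ j x ∈ Set.Icc (0 : ℝ) 1)
    (hψsum : ∀ x ∈ Set.Icc 0 Λ, ∑ j ∈ Finset.range (J + 1), ψ j x = 1)
    (hψsupp : ∀ j ≤ J, ∀ x ∈ Set.Icc 0 Λ, x ∉ Iprev I j ∪ I j → ψ j x = 0)
    (f : EuclideanSpace ℝ (Fin n)) :
    ∑ j ∈ Finset.range (J + 1), ∑ m : Fin n,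
      (|⟪specCut b lam (fun x => Real.sqrt (ψ j x)) (Iprev I j)
            (EuclideanSpace.single m 1), f⟫| ^ 2
        + |⟪specCut b lam (fun x => Real.sqrt (ψ j x)) (I j)
            (EuclideanSpace.single m 1), f⟫| ^ 2)
      = ‖f‖ ^ 2 := by
  classical
  -- inner product of specCut with f
  have hinner : ∀ (S : Set ℝ) (g : ℝ → ℝ) (m : Fin n),
      ⟪specCut b lam g S (EuclideanSpace.single m 1), f⟫
        = ∑ ℓ, ((if lam ℓ ∈ S then g (lam ℓ) else 0) * ⟪b ℓ, f⟫) * b ℓ m := by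
    intro S g m
    simp only [specCut, sum_inner, real_inner_smul_left]
    refine Finset.sum_congr rfl fun ℓ _ => ?_
    have h1 : ⟪b ℓ, EuclideanSpace.single m 1⟫ = b ℓ m := by
      simpa using EuclideanSpace.inner_single_right (𝕜 := ℝ) m 1 (b ℓ)
    rw [h1]; ring
  have hsum : ∀ (S : Set ℝ) (g : ℝ → ℝ),
      ∑ m : Fin n, |⟪specCut b lam g S (EuclideanSpace.single m 1), f⟫| ^ 2
        = ∑ ℓ, ((if lam ℓ ∈ S then g (lam ℓ) else 0) * ⟪b ℓ, f⟫) ^ 2 := by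
    intro S g
    calc ∑ m : Fin n, |⟪specCut b lam g S (EuclideanSpace.single m 1), f⟫| ^ 2
        = ∑ m : Fin n, (∑ ℓ, ((if lam ℓ ∈ S then g (lam ℓ) else 0) * ⟪b ℓ, f⟫) * b ℓ m) ^ 2 := by
          refine Finset.sum_congr rfl fun m _ => ?_
          rw [sq_abs, hinner]
      _ = ∑ ℓ, ((if lam ℓ ∈ S then g (lam ℓ) else 0) * ⟪b ℓ, f⟫) ^ 2 :=
          aux_sum_sq b _
  -- the key scalar identity
  have key : ∀ ℓ : Fin n, ∀ j ∈ Finset.range (J + 1),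
      (if lam ℓ ∈ Iprev I j then Real.sqrt (ψ j (lam ℓ)) else 0) ^ 2
        + (if lam ℓ ∈ I j then Real.sqrt (ψ j (lam ℓ)) else 0) ^ 2 = ψ j (lam ℓ) := by
    intro ℓ j hj
    rw [Finset.mem_range] at hj
    have hjJ : j ≤ J := Nat.lt_succ_iff.mp hj
    have hlm := hlam ℓ
    have hnn : 0 ≤ ψ j (lam ℓ) := (hψrange j hjJ _ hlm).1
    have hs : Real.sqrt (ψ j (lam ℓ)) ^ 2 = ψ j (lam ℓ) := Real.sq_sqrt hnn
    by_cases hP : lam ℓ ∈ Iprev I j <;> by_cases hQ : lam ℓ ∈ I j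
    · exfalso
      cases j with
      | zero => exact hP
      | succ k =>
        have hd := hIdisj k (by omega) (k + 1) hjJ (by omega)
        exact (Set.disjoint_left.mp hd hP) hQ
    · simp [hP, hQ, hs]
    · simp [hP, hQ, hs]
    · have h0 : ψ j (lam ℓ) = 0 := by
        refine hψsupp j hjJ _ hlm ?_
        intro hmem
        rcases hmem with h | h
        · exact hP h
        · exact hQ h
      simp [hP, hQ, h0]
  -- put everything together
  calc ∑ j ∈ Finset.range (J + 1), ∑ m : Fin n,
      (|⟪specCut b lam (fun x => Real.sqrt (ψ j x)) (Iprev I j)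
            (EuclideanSpace.single m 1), f⟫| ^ 2
        + |⟪specCut b lam (fun x => Real.sqrt (ψ j x)) (I j)
            (EuclideanSpace.single m 1), f⟫| ^ 2)
      = ∑ j ∈ Finset.range (J + 1),
          (∑ ℓ, ((if lam ℓ ∈ Iprev I j then Real.sqrt (ψ j (lam ℓ)) else 0) * ⟪b ℓ, f⟫) ^ 2
            + ∑ ℓ, ((if lam ℓ ∈ I j then Real.sqrt (ψ j (lam ℓ)) else 0) * ⟪b ℓ, f⟫) ^ 2) := by
        refine Finset.sum_congr rfl fun j _ => ?_
        rw [Finset.sum_add_distrib, hsum, hsum]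
    _ = ∑ ℓ, (∑ j ∈ Finset.range (J + 1),
          ((if lam ℓ ∈ Iprev I j then Real.sqrt (ψ j (lam ℓ)) else 0) ^ 2
            + (if lam ℓ ∈ I j then Real.sqrt (ψ j (lam ℓ)) else 0) ^ 2)) * ⟪b ℓ, f⟫ ^ 2 := by
        simp only [← Finset.sum_add_distrib, mul_pow]
        rw [Finset.sum_comm]
        refine Finset.sum_congr rfl fun ℓ _ => ?_
        rw [Finset.sum_mul]
        refine Finset.sum_congr rfl fun j _ => by ring
    _ = ∑ ℓ, ⟪b ℓ, f⟫ ^ 2 := by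
        refine Finset.sum_congr rfl fun ℓ _ => ?_
        rw [Finset.sum_congr rfl (key ℓ), hψsum _ (hlam ℓ), one_mul]
    _ = ‖f‖ ^ 2 := by
        have := OrthonormalBasis.sum_inner_mul_inner b f f
        rw [real_inner_self_eq_norm_sq] at this
        rw [← this]
        refine Finset.sum_congr rfl fun ℓ _ => ?_
        rw [sq, real_inner_comm f (b ℓ)]
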